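/- There exists a constant C > 0 such that for every radius r > 0, every function h in the Sobolev space W^{1,2} of the circle of radius r centered at the origin in ℝ² with real values, and every ε ∈ (0, r], one has ‖h‖_{L^∞}² ≤ C ∫_{S¹_r} (ε |h'|² + h²/ε). -/

import Mathlib

open Real

/-- Sobolev-type embedding with dependence on `ε` on circles: there is a
constant `C > 0` such that for every radius `r > 0`, every `C¹` function `h` on
the circle of radius `r` (parametrised by arclength, i.e. a `2πr`-periodic
function on `ℝ`), and every `ε ∈ (0, r]`,
`‖h‖_{L^∞}² ≤ C ∫_{S¹_r} (ε |h'|² + h²/ε)`. -/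
theorem sup_sq_le_const_mul_integral_circle :
    ∃ C : ℝ, 0 < C ∧
      ∀ (r : ℝ), 0 < r → ∀ (h : ℝ → ℝ), ContDiff ℝ 1 h →
        Function.Periodic h (2 * π * r) →
        ∀ ε : ℝ, 0 < ε → ε ≤ r →
          ∀ t : ℝ, (h t) ^ 2 ≤
            C * ∫ s in (0 : ℝ)..(2 * π * r),
              (ε * (deriv h s) ^ 2 + (h s) ^ 2 / ε) := by
  refine ⟨1 + 1 / (2 * π), by positivity, ?_⟩
  intro r hr h hh hper ε hε hεr t
  set L : ℝ := 2 * π * r with hL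
  have hLpos : 0 < L := by positivity
  have hc : Continuous h := hh.continuous
  have hd : Continuous (deriv h) := (hh.continuous_deriv le_rfl)
  -- the derivative is periodic
  have hdper : Function.Periodic (deriv h) L := by
    intro x
    have : h = fun y => h (y + L) := funext fun y => (hper y).symm
    conv_rhs => rw [this]
    rw [deriv_comp_add_const]
  -- integrand of the main integral
  set F : ℝ → ℝ := fun s => ε * (deriv h s) ^ 2 + (h s) ^ 2 / ε with hF
  have hFc : Continuous F := by fun_prop
  have hFnonneg : ∀ s, 0 ≤ F s := fun s => by positivity
  set I : ℝ := ∫ s in (0:ℝ)..L, F s with hI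
  have hInonneg : 0 ≤ I :=
    intervalIntegral.integral_nonneg hLpos.le fun s _ => hFnonneg s
  -- pointwise: |2 h h'| ≤ F
  have hptwise : ∀ s, |2 * h s * deriv h s| ≤ F s := by
    intro s
    show |2 * h s * deriv h s| ≤ ε * (deriv h s) ^ 2 + (h s) ^ 2 / ε
    rw [abs_le, div_eq_mul_inv]
    constructor
    · nlinarith [mul_le_mul_of_nonneg_right (sq_nonneg (ε * deriv h s + h s))
        (inv_nonneg.2 hε.le), mul_inv_cancel₀ hε.ne', sq_nonneg (deriv h s)]
    · nlinarith [mul_le_mul_of_nonneg_right (sq_nonneg (ε * deriv h s - h s))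
        (inv_nonneg.2 hε.le), mul_inv_cancel₀ hε.ne', sq_nonneg (deriv h s)]
  -- minimum point of h² on [0, L]
  obtain ⟨s₀, hs₀mem, hs₀min⟩ :=
    (isCompact_Icc (a := (0:ℝ)) (b := L)).exists_isMinOn
      (Set.nonempty_Icc.2 hLpos.le) ((hc.pow 2).continuousOn)
  -- step A : L * h(s₀)² ≤ ∫ h²
  have stepA : L * (h s₀) ^ 2 ≤ ∫ s in (0:ℝ)..L, (h s) ^ 2 := by
    have := intervalIntegral.integral_mono_on (μ := MeasureTheory.volume) hLpos.le
      ((continuous_const (y := (h s₀) ^ 2)).intervalIntegrable 0 L)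
      ((hc.pow 2).intervalIntegrable 0 L)
      (fun s hs => hs₀min hs)
    simpa [mul_comm] using this
  -- choose a representative of t in [s₀, s₀ + L]
  set n : ℤ := ⌊(t - s₀) / L⌋ with hn
  set t' : ℝ := t - n * L with ht'
  have hht' : h t' = h t := hper.sub_int_mul_eq n
  have ht'mem : s₀ ≤ t' ∧ t' ≤ s₀ + L := by
    have h1 : (n : ℝ) ≤ (t - s₀) / L := Int.floor_le _
    have h2 : (t - s₀) / L < n + 1 := Int.lt_floor_add_one _
    constructor
    · have := mul_le_mul_of_nonneg_right h1 hLpos.le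
      rw [div_mul_cancel₀ _ hLpos.ne'] at this
      linarith [this]
    · have := mul_le_mul_of_nonneg_right h2.le hLpos.le
      rw [div_mul_cancel₀ _ hLpos.ne'] at this
      nlinarith [this]
  -- step B : h(t')² - h(s₀)² = ∫_{s₀}^{t'} 2 h h'
  have hderivsq : ∀ s, HasDerivAt (fun y => (h y) ^ 2) (2 * h s * deriv h s) s := by
    intro s
    have : HasDerivAt h (deriv h s) s :=
      (hh.differentiable (by norm_num) s).hasDerivAt
    simpa [Function.comp_def, mul_comm, mul_assoc, mul_left_comm] using
      ((hasDerivAt_pow 2 (h s)).comp s this)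
  have stepB : (h t') ^ 2 - (h s₀) ^ 2 =
      ∫ s in s₀..t', 2 * h s * deriv h s := by
    rw [intervalIntegral.integral_eq_sub_of_hasDerivAt
      (fun s _ => hderivsq s)
      (((continuous_const.mul hc).mul hd).intervalIntegrable _ _)]
  -- bound : ∫_{s₀}^{t'} 2 h h' ≤ ∫₀^L F
  have stepC : (∫ s in s₀..t', 2 * h s * deriv h s) ≤ I := by
    have habs : (∫ s in s₀..t', 2 * h s * deriv h s) ≤
        ∫ s in s₀..(s₀ + L), |2 * h s * deriv h s| := by
      calc (∫ s in s₀..t', 2 * h s * deriv h s)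
          ≤ ∫ s in s₀..t', |2 * h s * deriv h s| :=
            intervalIntegral.integral_mono ht'mem.1
              (((continuous_const.mul hc).mul hd).intervalIntegrable _ _)
              (((continuous_const.mul hc).mul hd).abs.intervalIntegrable _ _)
              (fun s => le_abs_self _)
        _ ≤ ∫ s in s₀..(s₀ + L), |2 * h s * deriv h s| := by
            apply intervalIntegral.integral_mono_interval le_rfl ht'mem.1 ht'mem.2
            · filter_upwards with s using abs_nonneg _
            · exact (((continuous_const.mul hc).mul hd).abs.intervalIntegrable _ _)
    have hper2 : Function.Periodic (fun s => |2 * h s * deriv h s|) L := by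
      intro x; simp [hper x, hdper x]
    have heq : (∫ s in s₀..(s₀ + L), |2 * h s * deriv h s|) =
        ∫ s in (0:ℝ)..L, |2 * h s * deriv h s| := by
      simpa using hper2.intervalIntegral_add_eq s₀ 0
    have hmono : (∫ s in (0:ℝ)..L, |2 * h s * deriv h s|) ≤ I := by
      apply intervalIntegral.integral_mono hLpos.le
        (((continuous_const.mul hc).mul hd).abs.intervalIntegrable _ _)
        (hFc.intervalIntegrable _ _)
      exact fun s => hptwise s
    linarith [habs, heq ▸ habs, hmono, heq]
  -- step D : (1/L) ∫ h² ≤ (1/(2π)) I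
  have stepD : (h s₀) ^ 2 ≤ 1 / (2 * π) * I := by
    have h1 : (∫ s in (0:ℝ)..L, (h s) ^ 2) ≤ ε * I := by
      rw [← intervalIntegral.integral_const_mul]
      apply intervalIntegral.integral_mono hLpos.le
        ((hc.pow 2).intervalIntegrable _ _)
        ((continuous_const.mul hFc).intervalIntegrable _ _)
      intro s
      show (h s) ^ 2 ≤ ε * F s
      have : 0 ≤ ε * (ε * (deriv h s) ^ 2) := by positivity
      have h2 : ε * ((h s)^2 / ε) = (h s)^2 := by field_simp
      simp only [hF, mul_add, h2]
      linarith
    have h2 : L * (h s₀) ^ 2 ≤ ε * I := le_trans stepA h1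
    rw [hL] at h2
    have h3 : ε * I ≤ r * I := mul_le_mul_of_nonneg_right hεr hInonneg
    have h4 : 2 * π * (h s₀) ^ 2 ≤ I := by
      nlinarith [h2, h3, hr, sq_nonneg (h s₀), Real.pi_pos]
    rw [one_div_mul_eq_div, le_div_iff₀ (by positivity : (0:ℝ) < 2 * π)]
    linarith [h4]
  -- combine
  calc (h t) ^ 2 = (h t') ^ 2 := by rw [hht']
    _ = (h s₀) ^ 2 + ((h t') ^ 2 - (h s₀) ^ 2) := by ring
    _ ≤ 1 / (2 * π) * I + I := by
        rw [stepB]; exact add_le_add stepD stepC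
    _ = (1 + 1 / (2 * π)) * I := by ring
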